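/- Let q̃ : [0,∞) → ℝ be measurable with M := sup_{x≥0} ∫_x^{x+1} |q̃| < ∞. Define Q(ξ,η) = -(1/4)∫_ξ^η q̃(γ) dγ on {0 ≤ ξ ≤ η}. Then the Neumann series v = Σ_{n=0}^∞ (-1)^n K^n Q, where (Kv)(ξ,η) = (1/4)∫_0^ξ ∫_ξ^η q̃(η₁-ξ₁) v(ξ₁,η₁) dη₁ dξ₁, converges absolutely and uniformly on compact subsets of {0 ≤ ξ ≤ η}, and the limit v is continuous and satisfies the integral equation v = Q - Kv. -/

import Mathlib

open MeasureTheory intervalIntegral Filter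

/-- The Volterra-type integral operator from the Goursat problem. -/
noncomputable def Kop (q : ℝ → ℝ) (v : ℝ → ℝ → ℝ) : ℝ → ℝ → ℝ :=
  fun ξ η => (1 / 4) * ∫ ξ₁ in (0:ℝ)..ξ, ∫ η₁ in ξ..η, q (η₁ - ξ₁) * v ξ₁ η₁

/-- The inhomogeneity Q(ξ,η) = -(1/4)∫_ξ^η q̃(γ) dγ. -/
noncomputable def Qfun (q : ℝ → ℝ) : ℝ → ℝ → ℝ :=
  fun ξ η => -(1 / 4) * ∫ γ in ξ..η, q γ

section NeumannAux

open Set Topology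

noncomputable def Gf (q : ℝ → ℝ) (v : ℝ → ℝ → ℝ) (ξ₁ t : ℝ) : ℝ :=
  ∫ η₁ in (0:ℝ)..t, q (η₁ - ξ₁) * v ξ₁ η₁

variable {q : ℝ → ℝ} {v : ℝ → ℝ → ℝ}

lemma qInt (hq : Measurable q) (hloc : ∀ a b : ℝ, IntervalIntegrable (fun s => |q s|) volume a b)
    (a b : ℝ) : IntervalIntegrable q volume a b := by
  constructor
  · rw [IntegrableOn, ← integrable_norm_iff hq.aestronglyMeasurable.restrict]
    simpa [Real.norm_eq_abs, IntegrableOn] using (hloc a b).1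
  · rw [IntegrableOn, ← integrable_norm_iff hq.aestronglyMeasurable.restrict]
    simpa [Real.norm_eq_abs, IntegrableOn] using (hloc a b).2


lemma qIntShift (hq : Measurable q) (hloc : ∀ a b : ℝ, IntervalIntegrable (fun s => |q s|) volume a b)
    (c a b : ℝ) : IntervalIntegrable (fun s => q (s - c)) volume a b := by
  have := (qInt hq hloc (a - c) (b - c)).comp_sub_right c
  simpa using this


lemma qIntShiftAbs (hloc : ∀ a b : ℝ, IntervalIntegrable (fun s => |q s|) volume a b)
    (c a b : ℝ) : IntervalIntegrable (fun s => |q (s - c)|) volume a b := by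
  have := (hloc (a - c) (b - c)).comp_sub_right c
  simpa using this


lemma sliceInt (hq : Measurable q) (hloc : ∀ a b : ℝ, IntervalIntegrable (fun s => |q s|) volume a b)
    (hv : Continuous fun p : ℝ × ℝ => v p.1 p.2) (ξ₁ a b : ℝ) :
    IntervalIntegrable (fun η₁ => q (η₁ - ξ₁) * v ξ₁ η₁) volume a b :=
  (qIntShift hq hloc ξ₁ a b).mul_continuousOn
    ((hv.comp (continuous_const.prodMk continuous_id)).continuousOn)

lemma Gf_cont (hq : Measurable q) (hloc : ∀ a b : ℝ, IntervalIntegrable (fun s => |q s|) volume a b)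
    (hv : Continuous fun p : ℝ × ℝ => v p.1 p.2) (ξ₁ : ℝ) :
    Continuous (Gf q v ξ₁) :=
  intervalIntegral.continuous_primitive (fun a b => sliceInt hq hloc hv ξ₁ a b) 0


lemma Gf_meas (hq : Measurable q) (hv : Continuous fun p : ℝ × ℝ => v p.1 p.2) (t : ℝ) :
    Measurable fun ξ₁ => Gf q v ξ₁ t := by
  have hsm : StronglyMeasurable fun x : ℝ × ℝ => q (x.2 - x.1) * v x.1 x.2 :=
    ((hq.comp (measurable_snd.sub measurable_fst)).mul hv.measurable).stronglyMeasurable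
  have h1 : Measurable fun ξ₁ => ∫ η₁ in Ioc (0:ℝ) t, q (η₁ - ξ₁) * v ξ₁ η₁ :=
    (hsm.integral_prod_right').measurable
  have h2 : Measurable fun ξ₁ => ∫ η₁ in Ioc t (0:ℝ), q (η₁ - ξ₁) * v ξ₁ η₁ :=
    (hsm.integral_prod_right').measurable
  exact (h1.sub h2 : _)


lemma Gf_bound (hq : Measurable q)
    (hloc : ∀ a b : ℝ, IntervalIntegrable (fun s => |q s|) volume a b)
    (hv : Continuous fun p : ℝ × ℝ => v p.1 p.2) {R : ℝ} (hR : 0 ≤ R) :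
    ∃ B : ℝ, 0 ≤ B ∧ ∀ ξ₁ t : ℝ, |ξ₁| ≤ R → |t| ≤ R → |Gf q v ξ₁ t| ≤ B := by
  obtain ⟨Bv, hBv⟩ := (isCompact_Icc.prod isCompact_Icc).exists_bound_of_continuousOn
    (s := Icc (-(2*R)) (2*R) ×ˢ Icc (-(2*R)) (2*R)) hv.continuousOn
  set Bv' := max Bv 0 with hBv'
  have hBv'0 : 0 ≤ Bv' := le_max_right _ _
  have hvB : ∀ x y : ℝ, |x| ≤ 2*R → |y| ≤ 2*R → |v x y| ≤ Bv' := by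
    intro x y hx hy
    refine le_trans ?_ (le_max_left Bv 0)
    simpa [Real.norm_eq_abs] using hBv (x, y) ⟨abs_le.1 hx, abs_le.1 hy⟩
  have hqnn : (0:ℝ) ≤ ∫ s in (-(3*R))..(3*R), |q s| :=
    intervalIntegral.integral_nonneg (by linarith) (fun u _ => abs_nonneg _)
  refine ⟨Bv' * ∫ s in (-(3*R))..(3*R), |q s|, mul_nonneg hBv'0 hqnn, ?_⟩
  intro ξ₁ t hξ₁ ht
  have habs : (fun x => ‖q (x - ξ₁) * v ξ₁ x‖) = fun x => abs (q (x - ξ₁)) * abs (v ξ₁ x) := by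
    funext x; simp [Real.norm_eq_abs, abs_mul]
  have h1 : |Gf q v ξ₁ t| ≤ |∫ η₁ in (0:ℝ)..t, abs (q (η₁ - ξ₁)) * abs (v ξ₁ η₁)| := by
    have := intervalIntegral.norm_integral_le_abs_integral_norm
        (f := fun η₁ => q (η₁ - ξ₁) * v ξ₁ η₁) (a := 0) (b := t) (μ := volume)
    rw [habs] at this
    simpa [Real.norm_eq_abs, Gf] using this
  -- integrability of |q(·-ξ₁)|*|v ξ₁ ·| on any interval
  have hint : ∀ a b : ℝ, IntervalIntegrable (fun η₁ => abs (q (η₁ - ξ₁)) * abs (v ξ₁ η₁)) volume a b := by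
    intro a b
    exact (qIntShiftAbs hloc ξ₁ a b).mul_continuousOn
      (((hv.comp (continuous_const.prodMk continuous_id)).abs).continuousOn)
  have h2 : |∫ η₁ in (0:ℝ)..t, abs (q (η₁ - ξ₁)) * abs (v ξ₁ η₁)|
      ≤ |∫ η₁ in (-(2*R))..(2*R), abs (q (η₁ - ξ₁)) * abs (v ξ₁ η₁)| := by
    apply intervalIntegral.abs_integral_mono_interval
    · rw [Set.uIoc_of_le (by linarith : -(2*R) ≤ 2*R)]
      intro x hx
      rcases Set.mem_uIoc.1 hx with h | h
      · exact ⟨by linarith [h.1], by linarith [h.2, abs_le.1 ht |>.2]⟩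
      · exact ⟨by linarith [h.1, abs_le.1 ht |>.1], by linarith [h.2]⟩
    · refine Filter.Eventually.of_forall fun x => mul_nonneg (abs_nonneg _) (abs_nonneg _)
    · exact hint _ _
  have h3 : ∫ η₁ in (-(2*R))..(2*R), abs (q (η₁ - ξ₁)) * abs (v ξ₁ η₁)
      ≤ ∫ η₁ in (-(2*R))..(2*R), abs (q (η₁ - ξ₁)) * Bv' := by
    apply intervalIntegral.integral_mono_on (by linarith) (hint _ _)
      ((qIntShiftAbs hloc ξ₁ _ _).mul_const _)
    intro x hx
    have hx2 : |x| ≤ 2*R := abs_le.2 ⟨by linarith [hx.1], hx.2⟩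
    exact mul_le_mul_of_nonneg_left (hvB ξ₁ x (by linarith [abs_le.1 hξ₁]) hx2) (abs_nonneg _)
  have h4 : ∫ η₁ in (-(2*R))..(2*R), abs (q (η₁ - ξ₁)) * Bv'
      = (∫ η₁ in (-(2*R) - ξ₁)..(2*R - ξ₁), abs (q η₁)) * Bv' := by
    rw [intervalIntegral.integral_mul_const]
    congr 1
    simpa using intervalIntegral.integral_comp_sub_right (a := -(2*R)) (b := 2*R)
      (fun s => |q s|) ξ₁
  have h5 : ∫ η₁ in (-(2*R) - ξ₁)..(2*R - ξ₁), abs (q η₁) ≤ ∫ s in (-(3*R))..(3*R), |q s| := by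
    apply intervalIntegral.integral_mono_interval (c := -(3*R)) (d := 3*R)
    · linarith [abs_le.1 hξ₁|>.2]
    · linarith
    · linarith [abs_le.1 hξ₁|>.1]
    · exact Filter.Eventually.of_forall fun x => abs_nonneg _
    · exact hloc _ _
  have hnn : (0:ℝ) ≤ ∫ η₁ in (-(2*R))..(2*R), abs (q (η₁ - ξ₁)) * abs (v ξ₁ η₁) :=
    intervalIntegral.integral_nonneg (by linarith)
      (fun u _ => mul_nonneg (abs_nonneg _) (abs_nonneg _))
  calc |Gf q v ξ₁ t| ≤ _ := h1
    _ ≤ _ := h2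
    _ = ∫ η₁ in (-(2*R))..(2*R), abs (q (η₁ - ξ₁)) * abs (v ξ₁ η₁) := abs_of_nonneg hnn
    _ ≤ _ := h3
    _ = _ := h4
    _ ≤ Bv' * ∫ s in (-(3*R))..(3*R), |q s| := by
        rw [mul_comm Bv']
        exact mul_le_mul_of_nonneg_right h5 hBv'0


lemma Gf_integrableOn (hq : Measurable q)
    (hloc : ∀ a b : ℝ, IntervalIntegrable (fun s => |q s|) volume a b)
    (hv : Continuous fun p : ℝ × ℝ => v p.1 p.2) (t a b : ℝ) :
    IntegrableOn (fun ξ₁ => Gf q v ξ₁ t) (Ioc a b) volume := by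
  have hIoc : volume (Ioc a b) ≠ ⊤ := measure_Ioc_lt_top.ne
  set R := max (max |a| |b|) |t| with hRdef
  have hR : 0 ≤ R := le_trans (abs_nonneg t) (le_max_right _ _)
  obtain ⟨B, hB0, hB⟩ := Gf_bound hq hloc hv hR
  apply Measure.integrableOn_of_bounded (M := B) hIoc
    (Gf_meas hq hv t).aestronglyMeasurable
  rw [ae_restrict_iff' measurableSet_Ioc]
  refine Eventually.of_forall fun x hx => ?_
  rw [Real.norm_eq_abs]
  apply hB _ _ _ (le_max_right _ _)
  have h1 : |x| ≤ max |a| |b| := by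
    rw [abs_le]
    constructor
    · linarith [neg_abs_le a, le_max_left |a| |b|, hx.1]
    · linarith [le_abs_self b, le_max_right |a| |b|, hx.2]
  exact h1.trans (le_max_left _ _)


lemma Gf_intInt (hq : Measurable q)
    (hloc : ∀ a b : ℝ, IntervalIntegrable (fun s => |q s|) volume a b)
    (hv : Continuous fun p : ℝ × ℝ => v p.1 p.2) (t a b : ℝ) :
    IntervalIntegrable (fun ξ₁ => Gf q v ξ₁ t) volume a b :=
  ⟨Gf_integrableOn hq hloc hv t a b, Gf_integrableOn hq hloc hv t b a⟩


lemma Phi_cont (hq : Measurable q)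
    (hloc : ∀ a b : ℝ, IntervalIntegrable (fun s => |q s|) volume a b)
    (hv : Continuous fun p : ℝ × ℝ => v p.1 p.2) :
    Continuous fun p : ℝ × ℝ => ∫ ξ₁ in (0:ℝ)..p.1, Gf q v ξ₁ p.2 := by
  rw [continuous_iff_continuousAt]
  intro p₀
  set F : (ℝ × ℝ) → ℝ → ℝ := fun p ξ₁ =>
    Set.indicator (Ioc 0 p.1) (fun s => Gf q v s p.2) ξ₁ -
    Set.indicator (Ioc p.1 0) (fun s => Gf q v s p.2) ξ₁ with hF
  -- the indicators are integrable
  have hind : ∀ (c d t : ℝ), Integrable ((Ioc c d).indicator (fun s => Gf q v s t)) volume :=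
    fun c d t => (Gf_integrableOn hq hloc hv t c d).integrable_indicator measurableSet_Ioc
  have key : ∀ p : ℝ × ℝ, (∫ ξ₁, F p ξ₁) = ∫ ξ₁ in (0:ℝ)..p.1, Gf q v ξ₁ p.2 := by
    intro p
    rw [hF]
    rw [integral_sub (hind _ _ _) (hind _ _ _), MeasureTheory.integral_indicator measurableSet_Ioc,
      MeasureTheory.integral_indicator measurableSet_Ioc]
    rfl
  have goal : ContinuousAt (fun p : ℝ × ℝ => ∫ ξ₁, F p ξ₁) p₀ := by
    set R := |p₀.1| + |p₀.2| + 1 with hRdef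
    have hR : (0:ℝ) ≤ R := by positivity
    obtain ⟨B, hB0, hB⟩ := Gf_bound hq hloc hv hR
    have hmem : ∀ p : ℝ × ℝ, p ∈ Metric.ball p₀ 1 → |p.1| ≤ R ∧ |p.2| ≤ R := by
      intro p hp
      rw [Metric.mem_ball] at hp
      have h1 : dist p.1 p₀.1 ≤ dist p p₀ := by rw [Prod.dist_eq]; exact le_max_left _ _
      have h2 : dist p.2 p₀.2 ≤ dist p p₀ := by rw [Prod.dist_eq]; exact le_max_right _ _
      rw [Real.dist_eq] at h1 h2
      constructor
      · have h3 := abs_sub_abs_le_abs_sub p.1 p₀.1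
        have h4 := abs_nonneg p₀.2
        rw [hRdef]; linarith
      · have h3 := abs_sub_abs_le_abs_sub p.2 p₀.2
        have h4 := abs_nonneg p₀.1
        rw [hRdef]; linarith
    apply continuousAt_of_dominated (bound := Set.indicator (Icc (-R) R) (fun _ => B))
    · refine Eventually.of_forall fun p => ?_
      exact (((Gf_meas hq hv p.2).indicator measurableSet_Ioc).sub
        ((Gf_meas hq hv p.2).indicator measurableSet_Ioc)).aestronglyMeasurable
    · filter_upwards [Metric.ball_mem_nhds p₀ one_pos] with p hp
      refine Eventually.of_forall fun ξ₁ => ?_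
      obtain ⟨hp1, hp2⟩ := hmem p hp
      by_cases hξR : ξ₁ ∈ Icc (-R) R
      · rw [Set.indicator_of_mem hξR, Real.norm_eq_abs]
        have hGB : |Gf q v ξ₁ p.2| ≤ B := hB _ _ (abs_le.2 ⟨hξR.1, hξR.2⟩) hp2
        by_cases h1 : ξ₁ ∈ Ioc (0:ℝ) p.1
        · have h2 : ξ₁ ∉ Ioc p.1 (0:ℝ) := fun h => absurd (h1.1.trans_le h.2) (lt_irrefl 0)
          rw [hF]; simp only [Set.indicator_of_mem h1, Set.indicator_of_notMem h2, sub_zero]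
          exact hGB
        · by_cases h2 : ξ₁ ∈ Ioc p.1 (0:ℝ)
          · rw [hF]; simp only [Set.indicator_of_notMem h1, Set.indicator_of_mem h2, zero_sub,
              abs_neg]
            exact hGB
          · rw [hF]; simp only [Set.indicator_of_notMem h1, Set.indicator_of_notMem h2,
              sub_zero, abs_zero]
            exact hB0
      · have h1 : ξ₁ ∉ Ioc (0:ℝ) p.1 := by
          intro h; apply hξR
          exact ⟨by linarith [h.1, hR], h.2.trans (le_trans (le_abs_self _) hp1)⟩
        have h2 : ξ₁ ∉ Ioc p.1 (0:ℝ) := by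
          intro h; apply hξR
          refine ⟨le_trans ?_ h.1.le, by linarith [h.2, hR]⟩
          have := neg_abs_le p.1
          linarith [hp1]
        rw [Set.indicator_of_notMem hξR, hF]
        simp only [Set.indicator_of_notMem h1, Set.indicator_of_notMem h2, sub_zero, norm_zero]
        exact le_refl 0
    · exact ((integrableOn_const measure_Icc_lt_top.ne).integrable_indicator
        measurableSet_Icc)
    · have hae : ∀ᵐ ξ₁ : ℝ, ξ₁ ≠ p₀.1 := by
        rw [ae_iff]
        simp only [ne_eq, not_not, Set.setOf_eq_eq_singleton]
        exact measure_singleton _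
      filter_upwards [hae] with ξ₁ hξ₁
      have Gcont : Continuous fun t => Gf q v ξ₁ t := Gf_cont hq hloc hv ξ₁
      rcases lt_or_gt_of_ne hξ₁ with hlt | hgt
      · have hev : ∀ᶠ p : ℝ × ℝ in 𝓝 p₀, ξ₁ < p.1 :=
          (isOpen_lt continuous_const continuous_fst).eventually_mem hlt
        have heq : (fun p : ℝ × ℝ => F p ξ₁) =ᶠ[𝓝 p₀]
            fun p => if 0 < ξ₁ then Gf q v ξ₁ p.2 else 0 := by
          filter_upwards [hev] with p hp
          simp only [hF]
          have h2 : ξ₁ ∉ Ioc p.1 (0:ℝ) := fun h => absurd hp (not_lt.2 h.1.le)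
          rw [Set.indicator_of_notMem h2, sub_zero, Set.indicator_apply]
          simp only [Set.mem_Ioc, hp.le, and_true]
        apply ContinuousAt.congr _ heq.symm
        by_cases h0 : 0 < ξ₁
        · simp only [h0, if_true]
          exact (Gcont.comp continuous_snd).continuousAt
        · simp only [h0, if_false]
          exact continuousAt_const
      · have hev : ∀ᶠ p : ℝ × ℝ in 𝓝 p₀, p.1 < ξ₁ :=
          (isOpen_lt continuous_fst continuous_const).eventually_mem hgt
        have heq : (fun p : ℝ × ℝ => F p ξ₁) =ᶠ[𝓝 p₀]
            fun p => -(if ξ₁ ≤ 0 then Gf q v ξ₁ p.2 else 0) := by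
          filter_upwards [hev] with p hp
          simp only [hF]
          have h1 : ξ₁ ∉ Ioc (0:ℝ) p.1 := fun h => absurd hp (not_lt.2 h.2)
          rw [Set.indicator_of_notMem h1, zero_sub, Set.indicator_apply]
          simp only [Set.mem_Ioc, hp, true_and]
        apply ContinuousAt.congr _ heq.symm
        by_cases h0 : ξ₁ ≤ 0
        · simp only [h0, if_true]
          exact ((Gcont.comp continuous_snd).neg).continuousAt
        · simp only [h0, if_false, neg_zero]
          exact continuousAt_const
  have : (fun p : ℝ × ℝ => ∫ ξ₁, F p ξ₁) = fun p : ℝ × ℝ => ∫ ξ₁ in (0:ℝ)..p.1, Gf q v ξ₁ p.2 :=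
    funext key
  rwa [this] at goal


lemma Kop_repr (hq : Measurable q)
    (hloc : ∀ a b : ℝ, IntervalIntegrable (fun s => |q s|) volume a b)
    (hv : Continuous fun p : ℝ × ℝ => v p.1 p.2) (ξ η : ℝ) :
    Kop q v ξ η = (1/4) * ((∫ ξ₁ in (0:ℝ)..ξ, Gf q v ξ₁ η) - ∫ ξ₁ in (0:ℝ)..ξ, Gf q v ξ₁ ξ) := by
  have hinner : ∀ ξ₁ : ℝ, (∫ η₁ in ξ..η, q (η₁ - ξ₁) * v ξ₁ η₁) = Gf q v ξ₁ η - Gf q v ξ₁ ξ :=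
    fun ξ₁ => (intervalIntegral.integral_interval_sub_left
      (sliceInt hq hloc hv ξ₁ 0 η) (sliceInt hq hloc hv ξ₁ 0 ξ)).symm
  unfold Kop
  simp only [hinner]
  rw [intervalIntegral.integral_sub (Gf_intInt hq hloc hv η 0 ξ) (Gf_intInt hq hloc hv ξ 0 ξ)]


lemma Kop_cont (hq : Measurable q)
    (hloc : ∀ a b : ℝ, IntervalIntegrable (fun s => |q s|) volume a b)
    (hv : Continuous fun p : ℝ × ℝ => v p.1 p.2) :
    Continuous fun p : ℝ × ℝ => Kop q v p.1 p.2 := by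
  have hΦ := Phi_cont hq hloc hv
  have heq : (fun p : ℝ × ℝ => Kop q v p.1 p.2) = fun p : ℝ × ℝ =>
      (1/4) * ((∫ ξ₁ in (0:ℝ)..p.1, Gf q v ξ₁ p.2) - ∫ ξ₁ in (0:ℝ)..p.1, Gf q v ξ₁ p.1) :=
    funext fun p => Kop_repr hq hloc hv p.1 p.2
  rw [heq]
  exact continuous_const.mul (hΦ.sub (hΦ.comp (continuous_fst.prodMk continuous_fst)))


lemma Qfun_cont (hq : Measurable q)
    (hloc : ∀ a b : ℝ, IntervalIntegrable (fun s => |q s|) volume a b) :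
    Continuous fun p : ℝ × ℝ => Qfun q p.1 p.2 := by
  have hH : Continuous fun t => ∫ s in (0:ℝ)..t, q s :=
    intervalIntegral.continuous_primitive (fun a b => qInt hq hloc a b) 0
  have heq : (fun p : ℝ × ℝ => Qfun q p.1 p.2) = fun p : ℝ × ℝ =>
      -(1/4) * ((∫ s in (0:ℝ)..p.2, q s) - ∫ s in (0:ℝ)..p.1, q s) := by
    funext p
    unfold Qfun
    rw [intervalIntegral.integral_interval_sub_left (qInt hq hloc 0 p.2) (qInt hq hloc 0 p.1)]
  rw [heq]
  exact continuous_const.mul ((hH.comp continuous_snd).sub (hH.comp continuous_fst))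


lemma u_cont (hq : Measurable q)
    (hloc : ∀ a b : ℝ, IntervalIntegrable (fun s => |q s|) volume a b) (n : ℕ) :
    Continuous fun p : ℝ × ℝ => (Kop q)^[n] (Qfun q) p.1 p.2 := by
  induction n with
  | zero => exact Qfun_cont hq hloc
  | succ n ih =>
      simp only [Function.iterate_succ_apply']
      exact Kop_cont hq hloc ih


lemma inner_int_abs_est (hq : Measurable q)
    (hloc : ∀ a b : ℝ, IntervalIntegrable (fun s => |q s|) volume a b)
    {w : ℝ → ℝ → ℝ} (hw : Continuous fun p : ℝ × ℝ => w p.1 p.2)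
    {R : ℝ} (φ : ℝ → ℝ) (hφ : ∀ x, 0 ≤ φ x)
    (hbd : ∀ x y, 0 ≤ x → x ≤ y → y ≤ R → |w x y| ≤ φ x)
    {ξ η ξ₁ : ℝ} (h0 : 0 ≤ ξ₁) (h1 : ξ₁ ≤ ξ) (h2 : ξ ≤ η) (h3 : η ≤ R) :
    (∫ η₁ in ξ..η, abs (q (η₁ - ξ₁)) * abs (w ξ₁ η₁)) ≤ (∫ s in (0:ℝ)..R, |q s|) * φ ξ₁ := by
  have hwcont : Continuous fun y => w ξ₁ y := hw.comp (continuous_const.prodMk continuous_id)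
  have hint1 : IntervalIntegrable (fun η₁ => abs (q (η₁ - ξ₁)) * abs (w ξ₁ η₁)) volume ξ η :=
    (qIntShiftAbs hloc ξ₁ ξ η).mul_continuousOn (hwcont.abs.continuousOn)
  have hint2 : IntervalIntegrable (fun η₁ => abs (q (η₁ - ξ₁)) * φ ξ₁) volume ξ η :=
    (qIntShiftAbs hloc ξ₁ ξ η).mul_const _
  have hmono : (∫ η₁ in ξ..η, abs (q (η₁ - ξ₁)) * abs (w ξ₁ η₁))
      ≤ ∫ η₁ in ξ..η, abs (q (η₁ - ξ₁)) * φ ξ₁ := by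
    apply intervalIntegral.integral_mono_on h2 hint1 hint2
    intro y hy
    exact mul_le_mul_of_nonneg_left
      (hbd ξ₁ y h0 (h1.trans hy.1) (hy.2.trans h3)) (abs_nonneg _)
  have hshift : (∫ η₁ in ξ..η, abs (q (η₁ - ξ₁))) = ∫ s in (ξ - ξ₁)..(η - ξ₁), |q s| := by
    simpa using intervalIntegral.integral_comp_sub_right (a := ξ) (b := η) (fun s => |q s|) ξ₁
  have hqmono : (∫ s in (ξ - ξ₁)..(η - ξ₁), |q s|) ≤ ∫ s in (0:ℝ)..R, |q s| := by
    apply intervalIntegral.integral_mono_interval (by linarith) (by linarith) (by linarith)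
      (Eventually.of_forall fun x => abs_nonneg _) (hloc 0 R)
  calc (∫ η₁ in ξ..η, abs (q (η₁ - ξ₁)) * abs (w ξ₁ η₁)) ≤ _ := hmono
    _ = (∫ η₁ in ξ..η, abs (q (η₁ - ξ₁))) * φ ξ₁ := intervalIntegral.integral_mul_const _ _
    _ ≤ (∫ s in (0:ℝ)..R, |q s|) * φ ξ₁ := by
        rw [hshift]
        exact mul_le_mul_of_nonneg_right hqmono (hφ ξ₁)


lemma inner_abs_est (hq : Measurable q)
    (hloc : ∀ a b : ℝ, IntervalIntegrable (fun s => |q s|) volume a b)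
    {w : ℝ → ℝ → ℝ} (hw : Continuous fun p : ℝ × ℝ => w p.1 p.2)
    {R : ℝ} (φ : ℝ → ℝ) (hφ : ∀ x, 0 ≤ φ x)
    (hbd : ∀ x y, 0 ≤ x → x ≤ y → y ≤ R → |w x y| ≤ φ x)
    {ξ η ξ₁ : ℝ} (h0 : 0 ≤ ξ₁) (h1 : ξ₁ ≤ ξ) (h2 : ξ ≤ η) (h3 : η ≤ R) :
    |∫ η₁ in ξ..η, q (η₁ - ξ₁) * w ξ₁ η₁| ≤ (∫ s in (0:ℝ)..R, |q s|) * φ ξ₁ := by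
  have habs : |∫ η₁ in ξ..η, q (η₁ - ξ₁) * w ξ₁ η₁|
      ≤ ∫ η₁ in ξ..η, abs (q (η₁ - ξ₁)) * abs (w ξ₁ η₁) := by
    have h := intervalIntegral.abs_integral_le_integral_abs (μ := volume)
      (f := fun η₁ => q (η₁ - ξ₁) * w ξ₁ η₁) h2
    simpa only [abs_mul] using h
  exact habs.trans (inner_int_abs_est hq hloc hw φ hφ hbd h0 h1 h2 h3)

set_option maxHeartbeats 1000000 in
lemma iter_bound (hq : Measurable q)
    (hloc : ∀ a b : ℝ, IntervalIntegrable (fun s => |q s|) volume a b)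
    {R : ℝ} (hR : 0 ≤ R) (n : ℕ) :
    ∀ ξ η : ℝ, 0 ≤ ξ → ξ ≤ η → η ≤ R →
      |(Kop q)^[n] (Qfun q) ξ η| ≤
        ((1/4) * ∫ s in (0:ℝ)..R, |q s|) *
          (((1/4) * ∫ s in (0:ℝ)..R, |q s|) * ξ) ^ n / n.factorial := by
  set c : ℝ := (1/4) * ∫ s in (0:ℝ)..R, |q s| with hc
  have hq0 : (0:ℝ) ≤ ∫ s in (0:ℝ)..R, |q s| :=
    intervalIntegral.integral_nonneg hR (fun u _ => abs_nonneg (q u))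
  have hc0 : 0 ≤ c := by rw [hc]; linarith
  have hI : (∫ s in (0:ℝ)..R, |q s|) = 4 * c := by rw [hc]; ring
  clear_value c
  induction n with
  | zero =>
      intro ξ η hξ hξη hηR
      simp only [Function.iterate_zero, id_eq, pow_zero, Nat.factorial_zero, Nat.cast_one,
        mul_one, div_one]
      unfold Qfun
      rw [abs_mul]
      have h1 : |∫ γ in ξ..η, q γ| ≤ ∫ γ in ξ..η, |q γ| :=
        intervalIntegral.abs_integral_le_integral_abs hξη
      have h2 : (∫ γ in ξ..η, |q γ|) ≤ ∫ s in (0:ℝ)..R, |q s| :=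
        intervalIntegral.integral_mono_interval hξ hξη hηR
          (Eventually.of_forall fun x => abs_nonneg _) (hloc 0 R)
      rw [hI] at h2
      have habs14 : |(-(1/4) : ℝ)| = 1/4 := by norm_num
      rw [habs14]
      nlinarith [abs_nonneg (∫ γ in ξ..η, q γ)]
  | succ n ih =>
      intro ξ η hξ hξη hηR
      rw [Function.iterate_succ_apply']
      set w := (Kop q)^[n] (Qfun q) with hw
      have hwcont : Continuous fun p : ℝ × ℝ => w p.1 p.2 := u_cont hq hloc n
      set φ : ℝ → ℝ := fun x => c * (c * x) ^ n / n.factorial with hφdef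
      have hφ : ∀ x, 0 ≤ x → 0 ≤ φ x := by
        intro x hx
        apply div_nonneg _ (Nat.cast_nonneg _)
        exact mul_nonneg hc0 (pow_nonneg (mul_nonneg hc0 hx) _)
      -- pointwise inner bound for ξ₁ ∈ Icc 0 ξ
      have hg : ∀ ξ₁ ∈ Icc (0:ℝ) ξ,
          |∫ η₁ in ξ..η, q (η₁ - ξ₁) * w ξ₁ η₁| ≤ (4 * c) * φ ξ₁ := by
        intro ξ₁ hξ₁
        have hb : ∀ x y, 0 ≤ x → x ≤ y → y ≤ R → |w x y| ≤ φ (max x 0) := by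
          intro x y hx hxy hyR
          have := ih x y hx hxy hyR
          rw [hφdef]; simp only [max_eq_left hx]
          exact this
        have key := inner_abs_est hq hloc hwcont (R := R) (fun x => φ (max x 0))
          (fun x => hφ _ (le_max_right _ _)) hb hξ₁.1 hξ₁.2 hξη hηR
        rw [hI] at key
        simpa [max_eq_left hξ₁.1] using key
      -- integrability of the inner integral as a function of ξ₁
      have hgfun : (fun ξ₁ => ∫ η₁ in ξ..η, q (η₁ - ξ₁) * w ξ₁ η₁)
          = fun ξ₁ => Gf q w ξ₁ η - Gf q w ξ₁ ξ := by
        funext ξ₁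
        exact (intervalIntegral.integral_interval_sub_left
          (sliceInt hq hloc hwcont ξ₁ 0 η) (sliceInt hq hloc hwcont ξ₁ 0 ξ)).symm
      have hgint : IntervalIntegrable (fun ξ₁ => ∫ η₁ in ξ..η, q (η₁ - ξ₁) * w ξ₁ η₁)
          volume 0 ξ := by
        rw [hgfun]
        exact (Gf_intInt hq hloc hwcont η 0 ξ).sub (Gf_intInt hq hloc hwcont ξ 0 ξ)
      -- compute the right-hand side integrand
      have hsimp : (fun ξ₁ => (4 * c) * φ ξ₁)
          = fun ξ₁ => (4 * c * c * c^n / n.factorial) * ξ₁^n := by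
        funext x
        rw [hφdef]
        simp only [mul_pow]
        ring
      have hrhsint : IntervalIntegrable (fun ξ₁ => (4 * c) * φ ξ₁) volume 0 ξ := by
        rw [hsimp]
        exact (continuous_const.mul (continuous_pow n)).intervalIntegrable 0 ξ
      have houter : |∫ ξ₁ in (0:ℝ)..ξ, ∫ η₁ in ξ..η, q (η₁ - ξ₁) * w ξ₁ η₁|
          ≤ ∫ ξ₁ in (0:ℝ)..ξ, (4 * c) * φ ξ₁ := by
        have h1 := intervalIntegral.abs_integral_le_integral_abs (μ := volume)
          (f := fun ξ₁ => ∫ η₁ in ξ..η, q (η₁ - ξ₁) * w ξ₁ η₁) hξ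
        have h2 : (∫ ξ₁ in (0:ℝ)..ξ, |∫ η₁ in ξ..η, q (η₁ - ξ₁) * w ξ₁ η₁|)
            ≤ ∫ ξ₁ in (0:ℝ)..ξ, (4 * c) * φ ξ₁ :=
          intervalIntegral.integral_mono_on hξ hgint.abs hrhsint hg
        exact h1.trans h2
      have hcomp : (∫ ξ₁ in (0:ℝ)..ξ, (4 * c) * φ ξ₁)
          = (4 * c * c * c^n / n.factorial) * ((ξ^(n+1) - 0^(n+1)) / (n+1)) := by
        rw [hsimp, intervalIntegral.integral_const_mul, integral_pow]
      rw [hcomp] at houter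
      unfold Kop
      rw [abs_mul]
      have h14 : |((1:ℝ)/4)| = 1/4 := by norm_num
      rw [h14]
      have hfact : ((n+1).factorial : ℝ) = (n+1) * n.factorial := by
        rw [Nat.factorial_succ]; push_cast; ring
      have hn : ((n:ℝ)+1) ≠ 0 := by positivity
      have hf : (n.factorial : ℝ) ≠ 0 := Nat.cast_ne_zero.2 n.factorial_ne_zero
      have hfinal : (1/4 : ℝ) * ((4 * c * c * c^n / n.factorial) * ((ξ^(n+1) - 0^(n+1)) / (n+1)))
          = c * (c * ξ)^(n+1) / (n+1).factorial := by
        rw [hfact, mul_pow, zero_pow (Nat.succ_ne_zero n)]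
        field_simp
        ring
      have hcast : c * (c * ξ)^(n+1) / ((n+1).factorial : ℝ)
          = c * (c * ξ)^(n+1) / (((n+1).factorial : ℕ) : ℝ) := by norm_num
      calc (1/4 : ℝ) * |∫ ξ₁ in (0:ℝ)..ξ, ∫ η₁ in ξ..η, q (η₁ - ξ₁) * w ξ₁ η₁|
          ≤ (1/4) * ((4 * c * c * c^n / n.factorial) * ((ξ^(n+1) - 0^(n+1)) / (n+1))) := by
            have habs0 : (0:ℝ) ≤ |∫ ξ₁ in (0:ℝ)..ξ, ∫ η₁ in ξ..η, q (η₁ - ξ₁) * w ξ₁ η₁| :=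
              abs_nonneg _
            linarith
        _ = c * (c * ξ)^(n+1) / (n+1).factorial := hfinal


section Assembly

variable (hq : Measurable q) (hloc : ∀ a b : ℝ, IntervalIntegrable (fun s => |q s|) volume a b)

lemma cfun_nonneg {R : ℝ} (hR : 0 ≤ R) : 0 ≤ (1/4) * ∫ s in (0:ℝ)..R, |q s| := by
  have : (0:ℝ) ≤ ∫ s in (0:ℝ)..R, |q s| :=
    intervalIntegral.integral_nonneg hR (fun u _ => abs_nonneg _)
  linarith

include hq hloc in
lemma summable_bound_aux {R : ℝ} (hR : 0 ≤ R) :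
    Summable (fun n : ℕ => ((1/4) * ∫ s in (0:ℝ)..R, |q s|) *
      ((((1/4) * ∫ s in (0:ℝ)..R, |q s|)) * R) ^ n / n.factorial) := by
  have h := (Real.summable_pow_div_factorial (((1/4) * ∫ s in (0:ℝ)..R, |q s|) * R)).mul_left
    ((1/4) * ∫ s in (0:ℝ)..R, |q s|)
  simpa [mul_div_assoc] using h

include hq hloc in
lemma norm_term_le {R : ℝ} (hR : 0 ≤ R) (n : ℕ) (p : ℝ × ℝ)
    (h1 : 0 ≤ p.1) (h2 : p.1 ≤ p.2) (h3 : p.2 ≤ R) :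
    ‖(-1 : ℝ)^n * (Kop q)^[n] (Qfun q) p.1 p.2‖ ≤
      ((1/4) * ∫ s in (0:ℝ)..R, |q s|) *
        ((((1/4) * ∫ s in (0:ℝ)..R, |q s|)) * R) ^ n / n.factorial := by
  set c := (1/4) * ∫ s in (0:ℝ)..R, |q s| with hc
  have hc0 : 0 ≤ c := cfun_nonneg hR
  have hb := iter_bound hq hloc hR n p.1 p.2 h1 h2 h3
  have hnorm : ‖(-1 : ℝ)^n * (Kop q)^[n] (Qfun q) p.1 p.2‖ = |(Kop q)^[n] (Qfun q) p.1 p.2| := by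
    rw [Real.norm_eq_abs, abs_mul, abs_pow, abs_neg, abs_one, one_pow, one_mul]
  rw [hnorm]
  refine hb.trans ?_
  apply div_le_div_of_nonneg_right ?_ (by positivity)
  apply mul_le_mul_of_nonneg_left _ hc0
  exact pow_le_pow_left₀ (mul_nonneg hc0 h1)
    (mul_le_mul_of_nonneg_left (h2.trans h3) hc0) n

-- Part A/B/C assembly test
include hq hloc in
lemma partA (ξ η : ℝ) (hξ : 0 ≤ ξ) (hξη : ξ ≤ η) :
    Summable (fun n : ℕ => |(-1 : ℝ) ^ n * (Kop q)^[n] (Qfun q) ξ η|) ∧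
    HasSum (fun n : ℕ => (-1 : ℝ) ^ n * (Kop q)^[n] (Qfun q) ξ η)
      (∑' n : ℕ, (-1 : ℝ) ^ n * (Kop q)^[n] (Qfun q) ξ η) := by
  have hR : (0:ℝ) ≤ η := hξ.trans hξη
  have hsum : Summable (fun n : ℕ => |(-1 : ℝ) ^ n * (Kop q)^[n] (Qfun q) ξ η|) := by
    apply Summable.of_nonneg_of_le (fun n => abs_nonneg _)
      (fun n => ?_) (summable_bound_aux hq hloc hR)
    have h := norm_term_le hq hloc hR n (ξ, η) hξ hξη (le_refl η)
    rw [Real.norm_eq_abs] at h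
    exact h
  exact ⟨hsum, hsum.of_abs.hasSum⟩

include hq hloc in
lemma partB (Kc : Set (ℝ × ℝ)) (hKc : IsCompact Kc) :
    TendstoUniformlyOn
      (fun N : ℕ => fun p : ℝ × ℝ =>
        ∑ n ∈ Finset.range N, (-1 : ℝ) ^ n * (Kop q)^[n] (Qfun q) p.1 p.2)
      (fun p : ℝ × ℝ => ∑' n : ℕ, (-1 : ℝ) ^ n * (Kop q)^[n] (Qfun q) p.1 p.2) atTop
      (Kc ∩ {p : ℝ × ℝ | 0 ≤ p.1 ∧ p.1 ≤ p.2}) := by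
  obtain ⟨R, hRb⟩ := hKc.isBounded.exists_norm_le
  have hR : (0:ℝ) ≤ max R 0 := le_max_right _ _
  apply tendstoUniformlyOn_tsum_nat (summable_bound_aux hq hloc hR)
  intro n p hp
  obtain ⟨hpK, hp1, hp2⟩ := hp
  apply norm_term_le hq hloc hR n p hp1 hp2
  have : ‖p.2‖ ≤ ‖p‖ := norm_snd_le p
  have h2 := hRb p hpK
  rw [Real.norm_eq_abs] at this
  exact le_trans (le_trans (le_abs_self _) (this.trans h2)) (le_max_left _ _)

include hq hloc in
lemma partC :
    ContinuousOn (fun p : ℝ × ℝ => ∑' n : ℕ, (-1 : ℝ) ^ n * (Kop q)^[n] (Qfun q) p.1 p.2)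
      {p : ℝ × ℝ | 0 ≤ p.1 ∧ p.1 ≤ p.2} := by
  set s : Set (ℝ × ℝ) := {p : ℝ × ℝ | 0 ≤ p.1 ∧ p.1 ≤ p.2} with hs
  intro x hx
  have hball := partB hq hloc (Metric.closedBall x 1) (isCompact_closedBall x 1)
  have hpartial : ∀ N : ℕ, ContinuousOn (fun p : ℝ × ℝ =>
      ∑ n ∈ Finset.range N, (-1 : ℝ) ^ n * (Kop q)^[n] (Qfun q) p.1 p.2)
      (Metric.closedBall x 1 ∩ s) := by
    intro N
    apply Continuous.continuousOn
    apply continuous_finset_sum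
    intro i _
    exact continuous_const.mul (u_cont hq hloc i)
  have hcont : ContinuousOn (fun p : ℝ × ℝ =>
      ∑' n : ℕ, (-1 : ℝ) ^ n * (Kop q)^[n] (Qfun q) p.1 p.2)
      (Metric.closedBall x 1 ∩ s) :=
    hball.continuousOn (Eventually.of_forall hpartial).frequently
  have hxmem : x ∈ Metric.closedBall x 1 ∩ s :=
    ⟨Metric.mem_closedBall_self (by norm_num), hx⟩
  have hmem : Metric.closedBall x 1 ∩ s ∈ 𝓝[s] x :=
    Filter.inter_mem (mem_nhdsWithin_of_mem_nhds
      (Metric.closedBall_mem_nhds x one_pos)) self_mem_nhdsWithin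
  exact (hcont x hxmem).mono_of_mem_nhdsWithin hmem

-- the pointwise bound in the convenient φ-form
include hq hloc in
lemma iter_bound_phi {R : ℝ} (hR : 0 ≤ R) (n : ℕ) :
    ∀ x y : ℝ, 0 ≤ x → x ≤ y → y ≤ R →
      |(Kop q)^[n] (Qfun q) x y| ≤
        (fun t => ((1/4) * ∫ s in (0:ℝ)..R, |q s|) *
          (((1/4) * ∫ s in (0:ℝ)..R, |q s|) * max t 0) ^ n / n.factorial) x := by
  intro x y hx hxy hyR
  have := iter_bound hq hloc hR n x y hx hxy hyR
  simpa [max_eq_left hx] using this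

include hq hloc in
lemma partD (ξ η : ℝ) (hξ : 0 ≤ ξ) (hξη : ξ ≤ η) :
    (∑' n : ℕ, (-1 : ℝ) ^ n * (Kop q)^[n] (Qfun q) ξ η) =
      Qfun q ξ η - Kop q (fun x y => ∑' n : ℕ, (-1 : ℝ) ^ n * (Kop q)^[n] (Qfun q) x y) ξ η := by
  have hR : (0:ℝ) ≤ η := hξ.trans hξη
  set c : ℝ := (1/4) * ∫ s in (0:ℝ)..η, |q s| with hc
  have hc0 : 0 ≤ c := cfun_nonneg hR
  have hI : (∫ s in (0:ℝ)..η, |q s|) = 4 * c := by rw [hc]; ring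
  set u : ℕ → ℝ → ℝ → ℝ := fun n => (Kop q)^[n] (Qfun q) with hudef
  have hucont : ∀ n, Continuous fun p : ℝ × ℝ => u n p.1 p.2 := fun n => u_cont hq hloc n
  set φ : ℕ → ℝ → ℝ := fun n t => c * (c * max t 0) ^ n / n.factorial with hφdef
  have hφ0 : ∀ n t, 0 ≤ φ n t := by
    intro n t
    apply div_nonneg _ (Nat.cast_nonneg _)
    exact mul_nonneg hc0 (pow_nonneg (mul_nonneg hc0 (le_max_right _ _)) _)
  have hφle : ∀ n, ∀ t ∈ Icc (0:ℝ) ξ, φ n t ≤ φ n ξ := by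
    intro n t ht
    apply div_le_div_of_nonneg_right _ (by positivity)
    apply mul_le_mul_of_nonneg_left _ hc0
    apply pow_le_pow_left₀ (mul_nonneg hc0 (le_max_right _ _))
    rw [max_eq_left ht.1, max_eq_left hξ]
    exact mul_le_mul_of_nonneg_left ht.2 hc0
  have hbd : ∀ n, ∀ x y : ℝ, 0 ≤ x → x ≤ y → y ≤ η → |u n x y| ≤ φ n x :=
    fun n => iter_bound_phi hq hloc hR n
  -- the summable majorant for the inner exchange
  have hDsum : Summable (fun n : ℕ => (4*c) * φ n ξ) := by
    apply Summable.mul_left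
    have h := (Real.summable_pow_div_factorial (c * max ξ 0)).mul_left c
    simpa [hφdef, mul_div_assoc] using h
  -- inner slice integrands are interval integrable
  have hslice : ∀ n (ξ₁ : ℝ) a b, IntervalIntegrable
      (fun η₁ => q (η₁ - ξ₁) * ((-1:ℝ)^n * u n ξ₁ η₁)) volume a b := by
    intro n ξ₁ a b
    apply (qIntShift hq hloc ξ₁ a b).mul_continuousOn
    exact (continuous_const.mul ((hucont n).comp
      (continuous_const.prodMk continuous_id))).continuousOn
  -- estimate for ∫|q (·-ξ₁)| |u n ξ₁ ·| on ξ..η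
  have hest : ∀ n, ∀ ξ₁ ∈ Icc (0:ℝ) ξ,
      (∫ η₁ in ξ..η, abs (q (η₁ - ξ₁)) * abs (u n ξ₁ η₁)) ≤ (4*c) * φ n ξ := by
    intro n ξ₁ hξ₁
    have h := inner_int_abs_est hq hloc (hucont n) (φ n) (hφ0 n) (hbd n)
      hξ₁.1 hξ₁.2 hξη (le_refl η)
    rw [hI] at h
    exact h.trans (mul_le_mul_of_nonneg_left (hφle n ξ₁ hξ₁) (by linarith))
  -- ∫_{Ioc ξ η}‖q(η₁-ξ₁) ((-1)^n u n ξ₁ η₁)‖ bound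
  have hnormint : ∀ n, ∀ ξ₁ ∈ Icc (0:ℝ) ξ,
      (∫ η₁ in Ioc ξ η, ‖q (η₁ - ξ₁) * ((-1:ℝ)^n * u n ξ₁ η₁)‖) ≤ (4*c) * φ n ξ := by
    intro n ξ₁ hξ₁
    have heq : (fun η₁ => ‖q (η₁ - ξ₁) * ((-1:ℝ)^n * u n ξ₁ η₁)‖)
        = fun η₁ => abs (q (η₁ - ξ₁)) * abs (u n ξ₁ η₁) := by
      funext x
      rw [Real.norm_eq_abs, abs_mul, abs_mul, abs_pow, abs_neg, abs_one, one_pow, one_mul]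
    rw [heq, ← intervalIntegral.integral_of_le hξη]
    exact hest n ξ₁ hξ₁
  -- Step 1 : inner exchange
  have hinner : ∀ ξ₁ ∈ Icc (0:ℝ) ξ,
      (∫ η₁ in ξ..η, q (η₁ - ξ₁) * (∑' n : ℕ, (-1:ℝ)^n * u n ξ₁ η₁))
        = ∑' n : ℕ, (-1:ℝ)^n * ∫ η₁ in ξ..η, q (η₁ - ξ₁) * u n ξ₁ η₁ := by
    intro ξ₁ hξ₁
    have hfun : (fun η₁ => q (η₁ - ξ₁) * ∑' n : ℕ, (-1:ℝ)^n * u n ξ₁ η₁)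
        = fun η₁ => ∑' n : ℕ, q (η₁ - ξ₁) * ((-1:ℝ)^n * u n ξ₁ η₁) :=
      funext fun η₁ => tsum_mul_left.symm
    rw [hfun, intervalIntegral.integral_of_le hξη]
    rw [← MeasureTheory.integral_tsum_of_summable_integral_norm
      (fun n => (hslice n ξ₁ ξ η).1)
      (Summable.of_nonneg_of_le
        (fun n => MeasureTheory.integral_nonneg (fun x => norm_nonneg _))
        (fun n => hnormint n ξ₁ hξ₁) hDsum)]
    congr 1
    funext n
    rw [intervalIntegral.integral_of_le hξη]
    have : (fun η₁ => q (η₁ - ξ₁) * ((-1:ℝ)^n * u n ξ₁ η₁))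
        = fun η₁ => (-1:ℝ)^n * (q (η₁ - ξ₁) * u n ξ₁ η₁) := by
      funext x; ring
    rw [this, MeasureTheory.integral_const_mul]
  -- gbar and its integrability
  set gbar : ℕ → ℝ → ℝ := fun n ξ₁ => ∫ η₁ in ξ..η, q (η₁ - ξ₁) * u n ξ₁ η₁ with hgbar
  have hgfun : ∀ n, gbar n = fun ξ₁ => Gf q (u n) ξ₁ η - Gf q (u n) ξ₁ ξ := by
    intro n
    funext ξ₁
    exact (intervalIntegral.integral_interval_sub_left
      (sliceInt hq hloc (hucont n) ξ₁ 0 η) (sliceInt hq hloc (hucont n) ξ₁ 0 ξ)).symm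
  have hgint : ∀ n, IntervalIntegrable (gbar n) volume 0 ξ := by
    intro n
    rw [hgfun n]
    exact (Gf_intInt hq hloc (hucont n) η 0 ξ).sub (Gf_intInt hq hloc (hucont n) ξ 0 ξ)
  have hgbd : ∀ n, ∀ ξ₁ ∈ Icc (0:ℝ) ξ, |gbar n ξ₁| ≤ (4*c) * φ n ξ := by
    intro n ξ₁ hξ₁
    have h := inner_abs_est hq hloc (hucont n) (φ n) (hφ0 n) (hbd n)
      hξ₁.1 hξ₁.2 hξη (le_refl η)
    rw [hI] at h
    exact h.trans (mul_le_mul_of_nonneg_left (hφle n ξ₁ hξ₁) (by linarith))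
  -- outer exchange
  have hgnormint : ∀ n, (∫ ξ₁ in Ioc (0:ℝ) ξ, ‖(-1:ℝ)^n * gbar n ξ₁‖) ≤ ((4*c) * φ n ξ) * ξ := by
    intro n
    have hle : ∀ ξ₁ ∈ Ioc (0:ℝ) ξ, ‖(-1:ℝ)^n * gbar n ξ₁‖ ≤ (4*c) * φ n ξ := by
      intro ξ₁ hξ₁
      rw [Real.norm_eq_abs, abs_mul, abs_pow, abs_neg, abs_one, one_pow, one_mul]
      exact hgbd n ξ₁ ⟨hξ₁.1.le, hξ₁.2⟩
    have hint : IntegrableOn (fun ξ₁ => ‖(-1:ℝ)^n * gbar n ξ₁‖) (Ioc (0:ℝ) ξ) volume :=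
      (((hgint n).const_mul _).1).norm
    calc (∫ ξ₁ in Ioc (0:ℝ) ξ, ‖(-1:ℝ)^n * gbar n ξ₁‖)
        ≤ ∫ _ξ₁ in Ioc (0:ℝ) ξ, (4*c) * φ n ξ :=
          setIntegral_mono_on hint (integrableOn_const
            measure_Ioc_lt_top.ne) measurableSet_Ioc hle
      _ = ((4*c) * φ n ξ) * ξ := by
          rw [setIntegral_const, measureReal_def, Real.volume_Ioc, smul_eq_mul]
          rw [ENNReal.toReal_ofReal (by linarith)]
          ring
  have houter : (∫ ξ₁ in (0:ℝ)..ξ, ∑' n : ℕ, (-1:ℝ)^n * gbar n ξ₁)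
      = ∑' n : ℕ, (-1:ℝ)^n * ∫ ξ₁ in (0:ℝ)..ξ, gbar n ξ₁ := by
    rw [intervalIntegral.integral_of_le hξ]
    rw [← MeasureTheory.integral_tsum_of_summable_integral_norm
      (fun n => ((hgint n).const_mul _).1)
      (Summable.of_nonneg_of_le
        (fun n => MeasureTheory.integral_nonneg (fun x => norm_nonneg _))
        hgnormint (hDsum.mul_right ξ))]
    congr 1
    funext n
    rw [intervalIntegral.integral_of_le hξ, MeasureTheory.integral_const_mul]
  -- assemble: Kop of the sum
  have hKV : Kop q (fun x y => ∑' n : ℕ, (-1:ℝ)^n * u n x y) ξ η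
      = ∑' n : ℕ, (-1:ℝ)^n * u (n+1) ξ η := by
    unfold Kop
    have hcongr : (∫ ξ₁ in (0:ℝ)..ξ, ∫ η₁ in ξ..η,
          q (η₁ - ξ₁) * (∑' n : ℕ, (-1:ℝ)^n * u n ξ₁ η₁))
        = ∫ ξ₁ in (0:ℝ)..ξ, ∑' n : ℕ, (-1:ℝ)^n * gbar n ξ₁ := by
      apply intervalIntegral.integral_congr
      intro ξ₁ hξ₁
      rw [uIcc_of_le hξ] at hξ₁
      exact hinner ξ₁ hξ₁
    rw [hcongr, houter, ← tsum_mul_left]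
    congr 1
    funext n
    have : u (n+1) ξ η = (1/4) * ∫ ξ₁ in (0:ℝ)..ξ, gbar n ξ₁ := by
      rw [hudef]
      simp only [Function.iterate_succ_apply']
      rfl
    rw [this]
    ring
  -- final algebra
  have hsummable : Summable (fun n : ℕ => (-1:ℝ)^n * u n ξ η) :=
    (partA hq hloc ξ η hξ hξη).1.of_abs
  have hzeroadd : (∑' n : ℕ, (-1:ℝ)^n * u n ξ η)
      = (-1:ℝ)^0 * u 0 ξ η + ∑' n : ℕ, (-1:ℝ)^(n+1) * u (n+1) ξ η :=
    hsummable.tsum_eq_zero_add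
  have hneg : (fun n : ℕ => (-1:ℝ)^(n+1) * u (n+1) ξ η)
      = fun n : ℕ => -((-1:ℝ)^n * u (n+1) ξ η) := by
    funext n; rw [pow_succ]; ring
  rw [hKV, hzeroadd, hneg, tsum_neg]
  have hu0 : u 0 ξ η = Qfun q ξ η := rfl
  rw [hu0]
  ring

end Assembly

end NeumannAux

theorem neumann_series_converges
    (q : ℝ → ℝ) (hq : Measurable q)
    (hloc : ∀ a b : ℝ, IntervalIntegrable (fun s => |q s|) volume a b)
    (M : ℝ)
    (hM : IsLUB {y : ℝ | ∃ x : ℝ, 0 ≤ x ∧ y = ∫ s in x..(x + 1), |q s|} M) :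
    ∃ v : ℝ → ℝ → ℝ,
      (∀ ξ η : ℝ, 0 ≤ ξ → ξ ≤ η →
        Summable (fun n : ℕ => |(-1 : ℝ) ^ n * (Kop q)^[n] (Qfun q) ξ η|) ∧
        HasSum (fun n : ℕ => (-1 : ℝ) ^ n * (Kop q)^[n] (Qfun q) ξ η) (v ξ η)) ∧
      (∀ Kc : Set (ℝ × ℝ), IsCompact Kc →
        TendstoUniformlyOn
          (fun N : ℕ => fun p : ℝ × ℝ =>
            ∑ n ∈ Finset.range N, (-1 : ℝ) ^ n * (Kop q)^[n] (Qfun q) p.1 p.2)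
          (fun p : ℝ × ℝ => v p.1 p.2) atTop
          (Kc ∩ {p : ℝ × ℝ | 0 ≤ p.1 ∧ p.1 ≤ p.2})) ∧
      ContinuousOn (fun p : ℝ × ℝ => v p.1 p.2) {p : ℝ × ℝ | 0 ≤ p.1 ∧ p.1 ≤ p.2} ∧
      (∀ ξ η : ℝ, 0 ≤ ξ → ξ ≤ η → v ξ η = Qfun q ξ η - Kop q v ξ η) := by
  refine ⟨fun ξ η => ∑' n : ℕ, (-1 : ℝ) ^ n * (Kop q)^[n] (Qfun q) ξ η,
    fun ξ η hξ hξη => partA hq hloc ξ η hξ hξη,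
    fun Kc hKc => partB hq hloc Kc hKc,
    partC hq hloc,
    fun ξ η hξ hξη => partD hq hloc ξ η hξ hξη⟩
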